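/- Let k ≥ 1 be an integer and m = (m_1,…,m_n) an n-tuple of nonnegative integers. If 0 ≤ |m| − k + 1 < k and there exists an index i with m_i ≥ k, then w(m, |m| − k + 1) = 0. -/

import Mathlib

open Finsupp

/-- Multiindices `J : Fin n → ℕ` of total degree `j`. -/
abbrev MIdx (n j : ℕ) : Type := {J : Fin n → ℕ // ∑ i, J i = j}

/-- The complex vector space `V_j` with basis `{e_J : |J| = j}`. -/
abbrev V (n j : ℕ) : Type := MIdx n j →₀ ℂ

/-- `J + 1ᵢ` : the multiindex `J` with its `i`-th entry increased by 1. -/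
def incr {n : ℕ} (J : Fin n → ℕ) (i : Fin n) : Fin n → ℕ :=
  Function.update J i (J i + 1)

lemma sum_incr {n : ℕ} (J : Fin n → ℕ) (i : Fin n) :
    ∑ x, incr J i x = (∑ x, J x) + 1 := by
  unfold incr
  rw [Finset.sum_update_of_mem (Finset.mem_univ i),
    Finset.sum_eq_sum_sdiff_singleton_add (Finset.mem_univ i) J]
  ring

/-- The map `f_{j+1,m} : V_j → V_{j+1}`, `e_J ↦ ∑ᵢ (jᵢ+1)(mᵢ−jᵢ) e_{J+1ᵢ}`. -/
noncomputable def fMap (n : ℕ) (m : Fin n → ℕ) (j : ℕ) : V n j →ₗ[ℂ] V n (j + 1) :=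
  Finsupp.lift (V n (j + 1)) ℂ (MIdx n j) fun J =>
    ∑ i, (((J.1 i : ℂ) + 1) * ((m i : ℂ) - (J.1 i : ℂ))) •
      Finsupp.single (⟨incr J.1 i, by rw [sum_incr, J.2]⟩ : MIdx n (j + 1)) (1 : ℂ)

/-- `d(m,j)`: the number of multiindices `J` with `J i ≤ m i` for all `i` and `|J| = j`. -/
noncomputable def dCount (n : ℕ) (m : Fin n → ℕ) (j : ℤ) : ℕ :=
  Set.ncard {J : Fin n → ℕ | (∀ i, J i ≤ m i) ∧ ∑ i, (J i : ℤ) = j}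

/-- `w(m,j) = d(m,j) − d(m,j−1)`. -/
noncomputable def w (n : ℕ) (m : Fin n → ℕ) (j : ℤ) : ℤ :=
  (dCount n m j : ℤ) - (dCount n m (j - 1) : ℤ)

/-- If `0 ≤ |m| − k + 1 < k` and some `m_i ≥ k`, then `w(m, |m| − k + 1) = 0`. -/
theorem w_vanishes (n k : ℕ) (hk : 1 ≤ k) (m : Fin n → ℕ)
    (h0 : 0 ≤ (∑ i, (m i : ℤ)) - k + 1) (h1 : (∑ i, (m i : ℤ)) - k + 1 < k)
    (hex : ∃ i, k ≤ m i) :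
    w n m ((∑ i, (m i : ℤ)) - k + 1) = 0 := by
  obtain ⟨i0, hi0⟩ := hex
  have hki : (k : ℤ) ≤ m i0 := by exact_mod_cast hi0
  set j : ℤ := (∑ i, (m i : ℤ)) - k + 1 with hj
  suffices h : dCount n m j = dCount n m (j - 1) by
    unfold w; omega
  unfold dCount
  have hinj : Function.Injective
      (fun J : Fin n → ℕ => Function.update J i0 (J i0 + 1)) := by
    intro J J' hJJ
    funext i
    by_cases hi : i = i0
    · subst hi
      have := congrFun hJJ i
      simpa using this
    · have := congrFun hJJ i
      simpa [Function.update_of_ne hi] using this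
  have key : {J : Fin n → ℕ | (∀ i, J i ≤ m i) ∧ ∑ i, (J i : ℤ) = j}
      = (fun J : Fin n → ℕ => Function.update J i0 (J i0 + 1)) ''
        {J : Fin n → ℕ | (∀ i, J i ≤ m i) ∧ ∑ i, (J i : ℤ) = j - 1} := by
    ext J
    simp only [Set.mem_setOf_eq, Set.mem_image]
    constructor
    · rintro ⟨hle, hsum⟩
      have hbound : ∑ i ∈ Finset.univ \ {i0}, (J i : ℤ)
          ≤ ∑ i ∈ Finset.univ \ {i0}, (m i : ℤ) :=
        Finset.sum_le_sum fun i _ => by exact_mod_cast hle i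
      have hsplit : ∑ i, (J i : ℤ)
          = (∑ i ∈ Finset.univ \ {i0}, (J i : ℤ)) + (J i0 : ℤ) :=
        Finset.sum_eq_sum_sdiff_singleton_add (Finset.mem_univ i0) _
      have hsplitm : ∑ i, (m i : ℤ)
          = (∑ i ∈ Finset.univ \ {i0}, (m i : ℤ)) + (m i0 : ℤ) :=
        Finset.sum_eq_sum_sdiff_singleton_add (Finset.mem_univ i0) _
      have h1J : 1 ≤ J i0 := by
        have : (1 : ℤ) ≤ (J i0 : ℤ) := by omega
        exact_mod_cast this
      refine ⟨Function.update J i0 (J i0 - 1), ⟨?_, ?_⟩, ?_⟩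
      · intro i
        by_cases hi : i = i0
        · subst hi; have := hle i; simp; omega
        · simpa [Function.update_of_ne hi] using hle i
      · have hsplit' : ∑ i, ((Function.update J i0 (J i0 - 1)) i : ℤ)
            = (∑ i ∈ Finset.univ \ {i0},
                ((Function.update J i0 (J i0 - 1)) i : ℤ)) + ((J i0 - 1 : ℕ) : ℤ) := by
          rw [Finset.sum_eq_sum_sdiff_singleton_add (Finset.mem_univ i0)]
          simp
        have heq : ∑ i ∈ Finset.univ \ {i0}, ((Function.update J i0 (J i0 - 1)) i : ℤ)
            = ∑ i ∈ Finset.univ \ {i0}, (J i : ℤ) := by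
          refine Finset.sum_congr rfl fun i hi => ?_
          rw [Function.update_of_ne (by simpa using (Finset.mem_sdiff.mp hi).2)]
        rw [hsplit', heq]
        have : ((J i0 - 1 : ℕ) : ℤ) = (J i0 : ℤ) - 1 := by omega
        omega
      · funext i
        by_cases hi : i = i0
        · subst hi; simp; omega
        · simp [Function.update_of_ne hi]
    · rintro ⟨J', ⟨hle, hsum⟩, rfl⟩
      have hnonneg : 0 ≤ ∑ i ∈ Finset.univ \ {i0}, (J' i : ℤ) :=
        Finset.sum_nonneg fun i _ => by positivity
      have hsplit : ∑ i, (J' i : ℤ)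
          = (∑ i ∈ Finset.univ \ {i0}, (J' i : ℤ)) + (J' i0 : ℤ) :=
        Finset.sum_eq_sum_sdiff_singleton_add (Finset.mem_univ i0) _
      constructor
      · intro i
        by_cases hi : i = i0
        · subst hi; simp
          have h2 : (J' i : ℤ) + 1 ≤ (m i : ℤ) := by omega
          exact_mod_cast h2
        · simpa [Function.update_of_ne hi] using hle i
      · have hsplit' : ∑ i, ((Function.update J' i0 (J' i0 + 1)) i : ℤ)
            = (∑ i ∈ Finset.univ \ {i0},
                ((Function.update J' i0 (J' i0 + 1)) i : ℤ)) + ((J' i0 + 1 : ℕ) : ℤ) := by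
          rw [Finset.sum_eq_sum_sdiff_singleton_add (Finset.mem_univ i0)]
          simp
        have heq : ∑ i ∈ Finset.univ \ {i0}, ((Function.update J' i0 (J' i0 + 1)) i : ℤ)
            = ∑ i ∈ Finset.univ \ {i0}, (J' i : ℤ) := by
          refine Finset.sum_congr rfl fun i hi => ?_
          rw [Function.update_of_ne (by simpa using (Finset.mem_sdiff.mp hi).2)]
        rw [hsplit', heq]
        push_cast
        omega
  rw [key, Set.ncard_image_of_injective _ hinj]
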